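/- Let A = (a_{ij})_{0≤i,j≤d} be a skew-symmetric real (d+1) × (d+1) matrix, and define v : ℝ^d → ℝ^d by v(x) = ∑_{i=0}^d ∑_{j=0}^d a_{ij} λ_i(x) λ_j(x) (v_j − v_i). Then div v(x) = 2 ∑_{i=0}^d (∑_{j=0}^d a_{ij}) λ_i(x) for all x; in particular, div v ≡ 0 if and only if every row sum of A vanishes, i.e., ∑_{j=0}^d a_{ij} = 0 for i = 0, 1, …, d. -/

import Mathlib

open Matrix Finset

noncomputable section

/-- Divergence of a vector field on `ℝ^d`: the sum of the diagonal entries of its Jacobian. -/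
noncomputable def divg {d : ℕ} (w : EuclideanSpace ℝ (Fin d) → EuclideanSpace ℝ (Fin d))
    (x : EuclideanSpace ℝ (Fin d)) : ℝ :=
  ∑ i, fderiv ℝ w x (EuclideanSpace.single i 1) i

lemma aux_sum_single_mul {d : ℕ} (f : EuclideanSpace ℝ (Fin d) →L[ℝ] ℝ)
    (c : EuclideanSpace ℝ (Fin d)) :
    ∑ k, f (EuclideanSpace.single k 1) * c k = f c := by
  have h : ∑ k, c k • EuclideanSpace.single k (1:ℝ) = c := by
    simpa [EuclideanSpace.basisFun_apply] using
      (EuclideanSpace.basisFun (Fin d) ℝ).sum_repr c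
  conv_rhs => rw [← h]
  rw [map_sum]
  simp [mul_comm]

lemma aux_affine_hasFDerivAt {d : ℕ} (g : AffineMap ℝ (EuclideanSpace ℝ (Fin d)) ℝ)
    (x : EuclideanSpace ℝ (Fin d)) :
    HasFDerivAt (fun y => g y) (LinearMap.toContinuousLinearMap g.linear) x := by
  have h : (fun y => g y) = fun y => g.linear y + g 0 := by
    funext y
    conv_lhs => rw [show y = y +ᵥ (0 : EuclideanSpace ℝ (Fin d)) by simp]
    rw [g.map_vadd]; rfl
  rw [h]
  exact ((LinearMap.toContinuousLinearMap g.linear).hasFDerivAt).add_const _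

/-- for a skew-symmetric `(d+1)×(d+1)` matrix `a` and
`w(x) = ∑ᵢ∑ⱼ aᵢⱼ λᵢ(x) λⱼ(x) (vⱼ - vᵢ)`, one has
`div w(x) = 2 ∑ᵢ (∑ⱼ aᵢⱼ) λᵢ(x)`; in particular `div w ≡ 0` iff all row sums of `a` vanish. -/
theorem stmt6 (d : ℕ) (hd : 2 ≤ d)
    (v : Fin (d + 1) → EuclideanSpace ℝ (Fin d))
    (hv : AffineIndependent ℝ v)
    (L : Fin (d + 1) → (EuclideanSpace ℝ (Fin d) →ᵃ[ℝ] ℝ))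
    (hL : ∀ i j, L i (v j) = if i = j then 1 else 0)
    (a : Matrix (Fin (d + 1)) (Fin (d + 1)) ℝ) (ha : aᵀ = -a)
    (w : EuclideanSpace ℝ (Fin d) → EuclideanSpace ℝ (Fin d))
    (hw : ∀ x, w x = ∑ i, ∑ j, (a i j * (L i x * L j x)) • (v j - v i)) :
    (∀ x, divg w x = 2 * ∑ i, (∑ j, a i j) * L i x) ∧
      ((∀ x, divg w x = 0) ↔ ∀ i, ∑ j, a i j = 0) := by
  classical
  have hskew : ∀ i j, a j i = - a i j := by
    intro i j
    have h := congrFun (congrFun ha i) j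
    simpa [Matrix.transpose_apply] using h
  set ℓ : Fin (d+1) → (EuclideanSpace ℝ (Fin d) →L[ℝ] ℝ) :=
    fun i => LinearMap.toContinuousLinearMap (L i).linear with hℓdef
  have hlin : ∀ (k i j : Fin (d+1)), ℓ k (v j - v i) = L k (v j) - L k (v i) := by
    intro k i j
    have := (L k).linearMap_vsub (v j) (v i)
    simpa [hℓdef, vsub_eq_sub] using this
  have key : ∀ x, divg w x = 2 * ∑ i, (∑ j, a i j) * L i x := by
    intro x
    set D : EuclideanSpace ℝ (Fin d) →L[ℝ] EuclideanSpace ℝ (Fin d) :=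
      ∑ i, ∑ j, ((a i j) • ((L i x) • ℓ j + (L j x) • ℓ i)).smulRight (v j - v i) with hDdef
    have hD : HasFDerivAt w D x := by
      rw [funext hw]
      exact HasFDerivAt.fun_sum fun i _ => HasFDerivAt.fun_sum fun j _ =>
        ((((aux_affine_hasFDerivAt (L i) x).mul
            (aux_affine_hasFDerivAt (L j) x)).const_mul (a i j)).smul_const (v j - v i))
    have hDapp : ∀ (u : EuclideanSpace ℝ (Fin d)) (k : Fin d),
        (D u) k = ∑ i, ∑ j,
          a i j * ((L i x * (ℓ j u) + L j x * (ℓ i u)) * (v j - v i) k) := by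
      intro u k
      rw [hDdef, ContinuousLinearMap.sum_apply, WithLp.ofLp_sum, Finset.sum_apply k]
      refine Finset.sum_congr rfl fun i _ => ?_
      rw [ContinuousLinearMap.sum_apply, WithLp.ofLp_sum, Finset.sum_apply k]
      refine Finset.sum_congr rfl fun j _ => ?_
      simp only [ContinuousLinearMap.smulRight_apply, ContinuousLinearMap.smul_apply,
        ContinuousLinearMap.add_apply, smul_eq_mul, PiLp.smul_apply]
      ring
    have h1 : divg w x = ∑ k, (D (EuclideanSpace.single k 1)) k := by
      rw [divg, hD.fderiv]
    rw [h1]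
    have h2 : ∑ k, (D (EuclideanSpace.single k 1)) k
        = ∑ i, ∑ j, a i j * (L i x * (ℓ j (v j - v i)) + L j x * (ℓ i (v j - v i))) := by
      simp only [hDapp]
      rw [Finset.sum_comm]
      refine Finset.sum_congr rfl fun i _ => ?_
      rw [Finset.sum_comm]
      refine Finset.sum_congr rfl fun j _ => ?_
      rw [← Finset.mul_sum]
      congr 1
      have e1 := aux_sum_single_mul (ℓ j) (v j - v i)
      have e2 := aux_sum_single_mul (ℓ i) (v j - v i)
      calc ∑ k, (L i x * ℓ j (EuclideanSpace.single k 1)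
              + L j x * ℓ i (EuclideanSpace.single k 1)) * (v j - v i) k
          = L i x * (∑ k, ℓ j (EuclideanSpace.single k 1) * (v j - v i) k)
            + L j x * (∑ k, ℓ i (EuclideanSpace.single k 1) * (v j - v i) k) := by
            rw [Finset.mul_sum, Finset.mul_sum, ← Finset.sum_add_distrib]
            refine Finset.sum_congr rfl fun k _ => by ring
        _ = L i x * ℓ j (v j - v i) + L j x * ℓ i (v j - v i) := by rw [e1, e2]
    rw [h2]
    have h3 : ∀ i j : Fin (d+1),
        a i j * (L i x * (ℓ j (v j - v i)) + L j x * (ℓ i (v j - v i)))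
          = a i j * (L i x - L j x) := by
      intro i j
      rw [hlin, hlin, hL, hL, hL, hL]
      rcases eq_or_ne i j with rfl | hij
      · simp
      · rw [if_pos rfl, if_pos rfl, if_neg hij, if_neg (Ne.symm hij)]
        ring
    simp only [h3]
    have h4 : ∑ i, ∑ j, a i j * (L i x - L j x)
        = (∑ i, ∑ j, a i j * L i x) - ∑ i, ∑ j, a i j * L j x := by
      rw [← Finset.sum_sub_distrib]
      refine Finset.sum_congr rfl fun i _ => ?_
      rw [← Finset.sum_sub_distrib]
      refine Finset.sum_congr rfl fun j _ => by ring
    have h5 : ∑ i, ∑ j, a i j * L j x = - ∑ i, ∑ j, a i j * L i x := by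
      rw [Finset.sum_comm, ← Finset.sum_neg_distrib]
      refine Finset.sum_congr rfl fun i _ => ?_
      rw [← Finset.sum_neg_distrib]
      refine Finset.sum_congr rfl fun j _ => ?_
      rw [hskew j i]; ring
    rw [h4, h5]
    rw [show (∑ i, ∑ j, a i j * L i x) - -(∑ i, ∑ j, a i j * L i x)
        = 2 * ∑ i, ∑ j, a i j * L i x by ring]
    congr 1
    refine Finset.sum_congr rfl fun i _ => ?_
    rw [Finset.sum_mul]
  refine ⟨key, ?_, ?_⟩
  · intro h0 i
    have := h0 (v i)
    rw [key (v i)] at this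
    simp only [hL] at this
    rw [Finset.sum_congr rfl (fun j _ => by
      rw [show ((if j = i then (1:ℝ) else 0)) = if j = i then 1 else 0 from rfl])] at this
    simp only [mul_ite, mul_one, mul_zero] at this
    rw [Finset.sum_ite_eq' Finset.univ i (fun j => ∑ k, a j k)] at this
    simp at this
    linarith
  · intro h0 x
    rw [key x]
    simp [h0]
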